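/- Let τ be an ergodic invertible measure-preserving transformation of a nonatomic probability space. There exists a mean-zero function f ∈ L¹(X) that is a τ-coboundary with a measurable, a.e.-finite transfer function h which is not integrable. Specifically, given Rokhlin towers {E_n, τE_n, …, τ^{n-1}E_n} with p(E_n) = 1/(2n) and subsets D_n ⊆ E_n with p(D_n) = 1/(2n³), the function H = Σ_{n=1}^∞ n^{3/2} Σ_{k=0}^{n-1} 1_{τᵏD_n} is measurable, finite a.e., non-integrable, and f = H - H∘τ^{-1} belongs to L¹(X). -/

import Mathlib

open MeasureTheory ENNReal

lemma stmt12_sq {n : ℕ} (hn : 1 ≤ n) :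
    ((n:ℝ) ^ ((3:ℝ)/2)) * ((n:ℝ) ^ ((3:ℝ)/2)) = (n:ℝ)^3 := by
  have hp : (0:ℝ) < n := by exact_mod_cast hn
  rw [← Real.rpow_add hp]
  norm_num

lemma stmt12_sum1 : Summable (fun n : ℕ => (n:ℝ) ^ ((3:ℝ)/2) * (1/(2*(n:ℝ)^3))) := by
  have h := ((Real.summable_nat_rpow (p := -(3/2))).mpr (by norm_num)).mul_left (1/2)
  refine h.congr fun n => ?_
  rcases Nat.eq_zero_or_pos n with h0 | h0
  · subst h0
    simp only [Nat.cast_zero]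
    rw [show (-(3/2) : ℝ) = -((3:ℝ)/2) by norm_num, Real.rpow_neg le_rfl,
      Real.zero_rpow (by norm_num : ((3:ℝ)/2) ≠ 0)]
    norm_num
  · have hp : (0:ℝ) < n := by exact_mod_cast h0
    have ha : (0:ℝ) < (n:ℝ) ^ ((3:ℝ)/2) := Real.rpow_pos_of_pos hp _
    have hs := stmt12_sq h0
    rw [show (-(3/2) : ℝ) = -((3:ℝ)/2) by norm_num, Real.rpow_neg hp.le, ← hs]
    field_simp

lemma stmt12_sum2 : Summable (fun n : ℕ => (n:ℝ) * (1/(2*(n:ℝ)^3))) := by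
  have h := (Real.summable_one_div_nat_pow (p := 2)).mpr (by norm_num)
  refine Summable.of_nonneg_of_le (fun n => by positivity) (fun n => ?_) h
  rcases Nat.eq_zero_or_pos n with h0 | h0
  · subst h0; norm_num
  · have hp : (0:ℝ) < n := by exact_mod_cast h0
    have he : (n:ℝ) * (1/(2*(n:ℝ)^3)) = 1/(2*(n:ℝ)^2) := by field_simp
    rw [he]
    apply one_div_le_one_div_of_le (by positivity)
    nlinarith

lemma stmt12_div : ¬ Summable (fun n : ℕ => (n:ℝ) ^ ((3:ℝ)/2) * ((n:ℝ) * (1/(2*(n:ℝ)^3)))) := by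
  intro hS
  have hcmp : Summable (fun n : ℕ => (1/2) * (1/(n:ℝ))) := by
    refine Summable.of_nonneg_of_le (fun n => by positivity) (fun n => ?_) hS
    rcases Nat.eq_zero_or_pos n with h0 | h0
    · subst h0; norm_num
    · have hp : (0:ℝ) < n := by exact_mod_cast h0
      have hn1 : (1:ℝ) ≤ n := by exact_mod_cast h0
      have hge : (n:ℝ) ≤ (n:ℝ) ^ ((3:ℝ)/2) := by
        nth_rewrite 1 [← Real.rpow_one (n:ℝ)]
        exact Real.rpow_le_rpow_of_exponent_le hn1 (by norm_num)
      calc (1/2) * (1/(n:ℝ)) = (n:ℝ) * ((n:ℝ) * (1/(2*(n:ℝ)^3))) := by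
            field_simp
        _ ≤ (n:ℝ) ^ ((3:ℝ)/2) * ((n:ℝ) * (1/(2*(n:ℝ)^3))) := by
            apply mul_le_mul_of_nonneg_right hge; positivity
  have h2 : Summable (fun n : ℕ => 1 / (n:ℝ)) := by
    refine (hcmp.mul_left 2).congr fun n => ?_
    ring
  exact Real.not_summable_one_div_natCast h2

lemma stmt12_cast_inv (n : ℕ) (hn : 1 ≤ n) :
    (1:ℝ≥0∞) / (2 * (n:ℝ≥0∞) ^ 3) = ENNReal.ofReal (1/(2*(n:ℝ)^3)) := by
  have hp : (0:ℝ) < n := by exact_mod_cast hn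
  rw [ENNReal.ofReal_div_of_pos (by positivity), ENNReal.ofReal_one,
    ENNReal.ofReal_mul (by norm_num), ENNReal.ofReal_pow hp.le,
    ENNReal.ofReal_natCast, ENNReal.ofReal_ofNat]

lemma stmt12_cast_rpow (n : ℕ) :
    (n:ℝ≥0∞) ^ ((3:ℝ)/2) = ENNReal.ofReal ((n:ℝ) ^ ((3:ℝ)/2)) := by
  rcases Nat.eq_zero_or_pos n with h0 | h0
  · subst h0
    simp only [Nat.cast_zero]
    rw [ENNReal.zero_rpow_of_pos (by norm_num), Real.zero_rpow (by norm_num)]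
    simp
  · have hp : (0:ℝ) < n := by exact_mod_cast h0
    rw [← ENNReal.ofReal_rpow_of_pos hp, ENNReal.ofReal_natCast]

/-- Explicit construction (via Rokhlin towers E_n of height n with
p(E_n)=1/(2n) and D_n ⊆ E_n with p(D_n)=1/(2n³)) of a measurable, a.e.-finite,
non-integrable transfer function H = Σ_n n^{3/2} Σ_{k<n} 1_{τᵏD_n} whose coboundary
f = H - H∘τ⁻¹ is integrable (and mean-zero). -/
theorem stmt12 {X : Type*} [MeasurableSpace X] (μ : Measure X) [IsProbabilityMeasure μ]
    [NullSingletonClass μ]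
    (τ τi : X → X) (hτ : MeasurePreserving τ μ μ) (hτi : MeasurePreserving τi μ μ)
    (hinv : ∀ x, τi (τ x) = x ∧ τ (τi x) = x)
    (herg : Ergodic τ μ)
    (E D : ℕ → Set X)
    (hEm : ∀ n, MeasurableSet (E n)) (hDm : ∀ n, MeasurableSet (D n))
    (hDE : ∀ n, D n ⊆ E n)
    -- {E_n, τE_n, …, τ^{n-1}E_n} is a Rokhlin tower (τᵏE_n = (τi^[k])⁻¹(E_n)):
    (htower : ∀ n, ∀ j < n, ∀ k < n, j ≠ k →
      Disjoint (τi^[j] ⁻¹' (E n)) (τi^[k] ⁻¹' (E n)))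
    (hEmeas : ∀ n, 1 ≤ n → μ (E n) = 1 / (2 * n))
    (hDmeas : ∀ n, 1 ≤ n → μ (D n) = 1 / (2 * n ^ 3))
    (H : X → ℝ≥0∞)
    (hH : ∀ x, H x = ∑' n : ℕ, (n : ℝ≥0∞) ^ ((3 : ℝ) / 2) *
      ∑ k ∈ Finset.range n, Set.indicator (τi^[k] ⁻¹' (D n)) (fun _ => (1 : ℝ≥0∞)) x) :
    (∀ᵐ x ∂μ, H x ≠ ∞) ∧
    (∫⁻ x, H x ∂μ = ∞) ∧
    Integrable (fun x => (H x).toReal - (H (τi x)).toReal) μ ∧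
    ∫ x, ((H x).toReal - (H (τi x)).toReal) ∂μ = 0 := by
  classical
  have hτim : Measurable τi := hτi.measurable
  have hpre : ∀ (n k : ℕ), MeasurableSet (τi^[k] ⁻¹' (D n)) :=
    fun n k => (hDm n).preimage (hτim.iterate k)
  have hμpre : ∀ (n k : ℕ), μ (τi^[k] ⁻¹' (D n)) = μ (D n) :=
    fun n k => (hτi.iterate k).measure_preimage (hDm n).nullMeasurableSet
  have hindm : ∀ (n k : ℕ),
      Measurable fun x => Set.indicator (τi^[k] ⁻¹' (D n)) (fun _ => (1:ℝ≥0∞)) x :=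
    fun n k => measurable_const.indicator (hpre n k)
  have hSm : ∀ n, Measurable fun x =>
      ∑ k ∈ Finset.range n, Set.indicator (τi^[k] ⁻¹' (D n)) (fun _ => (1:ℝ≥0∞)) x :=
    fun n => Finset.measurable_sum _ fun k _ => hindm n k
  have htermm : ∀ n : ℕ, Measurable fun x => (n : ℝ≥0∞) ^ ((3 : ℝ) / 2) *
      ∑ k ∈ Finset.range n, Set.indicator (τi^[k] ⁻¹' (D n)) (fun _ => (1:ℝ≥0∞)) x :=
    fun n => (hSm n).const_mul _
  have hHfun : H = fun x => ∑' n : ℕ, (n : ℝ≥0∞) ^ ((3 : ℝ) / 2) *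
      ∑ k ∈ Finset.range n, Set.indicator (τi^[k] ⁻¹' (D n)) (fun _ => (1:ℝ≥0∞)) x :=
    funext hH
  have hHm : Measurable H := by
    rw [hHfun]; exact Measurable.ennreal_tsum htermm
  have hcfin : ∀ n : ℕ, ((n : ℝ≥0∞) ^ ((3 : ℝ) / 2)) ≠ ∞ :=
    fun n => (ENNReal.rpow_lt_top_of_nonneg (by norm_num) (ENNReal.natCast_ne_top n)).ne
  have hc0 : ((0:ℕ) : ℝ≥0∞) ^ ((3 : ℝ) / 2) = 0 := by
    simp only [Nat.cast_zero]
    exact ENNReal.zero_rpow_of_pos (by norm_num)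
  -- Borel-Cantelli
  have hAfin : ∑' n : ℕ, μ (⋃ k ∈ Finset.range n, τi^[k] ⁻¹' (D n)) ≠ ∞ := by
    have hb : ∀ n : ℕ, μ (⋃ k ∈ Finset.range n, τi^[k] ⁻¹' (D n)) ≤
        ENNReal.ofReal ((n:ℝ) * (1/(2*(n:ℝ)^3))) := by
      intro n
      rcases Nat.eq_zero_or_pos n with h0 | h0
      · subst h0; simp
      · calc μ (⋃ k ∈ Finset.range n, τi^[k] ⁻¹' (D n))
            ≤ ∑ k ∈ Finset.range n, μ (τi^[k] ⁻¹' (D n)) := measure_biUnion_finset_le _ _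
          _ = (n:ℝ≥0∞) * μ (D n) := by
              simp [hμpre, Finset.sum_const, nsmul_eq_mul]
          _ = ENNReal.ofReal ((n:ℝ) * (1/(2*(n:ℝ)^3))) := by
              rw [hDmeas n h0, stmt12_cast_inv n h0,
                ENNReal.ofReal_mul (by positivity), ENNReal.ofReal_natCast]
    have hfin : ∑' n : ℕ, ENNReal.ofReal ((n:ℝ) * (1/(2*(n:ℝ)^3))) ≠ ∞ := by
      rw [← ENNReal.ofReal_tsum_of_nonneg (fun n => by positivity) stmt12_sum2]
      exact ENNReal.ofReal_ne_top
    exact ne_top_of_le_ne_top hfin (ENNReal.tsum_le_tsum hb)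
  have hae_fin : ∀ᵐ x ∂μ, H x ≠ ∞ := by
    filter_upwards [MeasureTheory.ae_finite_setOf_mem hAfin] with x hx
    obtain ⟨N, hN⟩ := hx.bddAbove
    rw [hH x]
    have hzero : ∀ n ∉ Finset.range (N+1), (n : ℝ≥0∞) ^ ((3 : ℝ) / 2) *
        ∑ k ∈ Finset.range n, Set.indicator (τi^[k] ⁻¹' (D n)) (fun _ => (1:ℝ≥0∞)) x = 0 := by
      intro n hn
      have hnN : N < n := by simpa using hn
      have hxn : x ∉ ⋃ k ∈ Finset.range n, τi^[k] ⁻¹' (D n) := by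
        intro hmem
        have hle : n ≤ N := hN hmem
        omega
      have hS0 : (∑ k ∈ Finset.range n,
          Set.indicator (τi^[k] ⁻¹' (D n)) (fun _ => (1:ℝ≥0∞)) x) = 0 := by
        apply Finset.sum_eq_zero
        intro k hk
        apply Set.indicator_of_notMem
        intro hxk
        apply hxn
        simp only [Set.mem_iUnion]
        exact ⟨k, hk, hxk⟩
      rw [hS0, mul_zero]
    rw [tsum_eq_sum hzero]
    refine (ENNReal.sum_lt_top.2 fun n _ => ?_).ne
    have hSle : (∑ k ∈ Finset.range n,
        Set.indicator (τi^[k] ⁻¹' (D n)) (fun _ => (1:ℝ≥0∞)) x) ≤ (n:ℝ≥0∞) := by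
      calc (∑ k ∈ Finset.range n, Set.indicator (τi^[k] ⁻¹' (D n)) (fun _ => (1:ℝ≥0∞)) x)
          ≤ ∑ _k ∈ Finset.range n, (1:ℝ≥0∞) := by
            refine Finset.sum_le_sum fun k _ => ?_
            by_cases hxk : x ∈ τi^[k] ⁻¹' (D n) <;> simp [Set.indicator_apply, hxk]
        _ = (n:ℝ≥0∞) := by simp
    exact ENNReal.mul_lt_top (hcfin n).lt_top
      (lt_of_le_of_lt hSle (ENNReal.natCast_lt_top n))
  -- lintegral of H
  have hlintH : ∫⁻ x, H x ∂μ = ∑' n : ℕ, (n : ℝ≥0∞) ^ ((3 : ℝ) / 2) *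
      ((n:ℝ≥0∞) * μ (D n)) := by
    simp only [hH]
    rw [lintegral_tsum fun n => (htermm n).aemeasurable]
    refine tsum_congr fun n => ?_
    rw [lintegral_const_mul _ (hSm n)]
    congr 1
    calc ∫⁻ x, (∑ k ∈ Finset.range n,
          Set.indicator (τi^[k] ⁻¹' (D n)) (fun _ => (1:ℝ≥0∞)) x) ∂μ
        = ∑ k ∈ Finset.range n, μ (τi^[k] ⁻¹' (D n)) := by
          rw [lintegral_finset_sum _ fun k _ => hindm n k]
          refine Finset.sum_congr rfl fun k _ => ?_
          rw [lintegral_indicator_const (hpre n k), one_mul]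
      _ = (n:ℝ≥0∞) * μ (D n) := by simp [hμpre, Finset.sum_const, nsmul_eq_mul]
  have hlint_top : ∫⁻ x, H x ∂μ = ∞ := by
    rw [hlintH]
    by_contra h
    have hsummable := ENNReal.summable_toReal h
    apply stmt12_div
    refine hsummable.congr fun n => ?_
    rcases Nat.eq_zero_or_pos n with h0 | h0
    · subst h0
      simp only [Nat.cast_zero]
      rw [ENNReal.zero_rpow_of_pos (by norm_num : (0:ℝ) < 3/2), zero_mul,
        ENNReal.toReal_zero, Real.zero_rpow (by norm_num : ((3:ℝ)/2) ≠ 0), zero_mul]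
    · rw [hDmeas n h0, stmt12_cast_inv n h0, stmt12_cast_rpow n,
        ← ENNReal.ofReal_natCast n, ← ENNReal.ofReal_mul (by positivity),
        ← ENNReal.ofReal_mul (by positivity), ENNReal.toReal_ofReal (by positivity)]
  -- g1 and g2
  set g1 : X → ℝ≥0∞ := fun x => ∑' n : ℕ, (n : ℝ≥0∞) ^ ((3 : ℝ) / 2) *
    Set.indicator (D n) (fun _ => (1:ℝ≥0∞)) x with hg1
  set g2 : X → ℝ≥0∞ := fun x => ∑' n : ℕ, (n : ℝ≥0∞) ^ ((3 : ℝ) / 2) *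
    Set.indicator (τi^[n] ⁻¹' (D n)) (fun _ => (1:ℝ≥0∞)) x with hg2
  have hg1m : Measurable g1 :=
    Measurable.ennreal_tsum fun n => (measurable_const.indicator (hDm n)).const_mul _
  have hg2m : Measurable g2 :=
    Measurable.ennreal_tsum fun n => (measurable_const.indicator (hpre n n)).const_mul _
  have hI : ∑' n : ℕ, (n : ℝ≥0∞) ^ ((3 : ℝ) / 2) * μ (D n) ≠ ∞ := by
    have hb : ∀ n : ℕ, (n : ℝ≥0∞) ^ ((3 : ℝ) / 2) * μ (D n) =
        ENNReal.ofReal ((n:ℝ)^((3:ℝ)/2) * (1/(2*(n:ℝ)^3))) := by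
      intro n
      rcases Nat.eq_zero_or_pos n with h0 | h0
      · subst h0
        simp only [Nat.cast_zero]
        rw [ENNReal.zero_rpow_of_pos (by norm_num : (0:ℝ) < 3/2), zero_mul,
          Real.zero_rpow (by norm_num : ((3:ℝ)/2) ≠ 0), zero_mul, ENNReal.ofReal_zero]
      · rw [hDmeas n h0, stmt12_cast_inv n h0, stmt12_cast_rpow n,
          ← ENNReal.ofReal_mul (by positivity)]
    rw [tsum_congr hb, ← ENNReal.ofReal_tsum_of_nonneg (fun n => by positivity) stmt12_sum1]
    exact ENNReal.ofReal_ne_top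
  have hlintg1 : ∫⁻ x, g1 x ∂μ = ∑' n : ℕ, (n : ℝ≥0∞) ^ ((3 : ℝ) / 2) * μ (D n) := by
    simp only [hg1]
    rw [lintegral_tsum fun n => ((measurable_const.indicator (hDm n)).const_mul _).aemeasurable]
    refine tsum_congr fun n => ?_
    rw [lintegral_const_mul _ (measurable_const.indicator (hDm n)),
      lintegral_indicator_const (hDm n), one_mul]
  have hlintg2 : ∫⁻ x, g2 x ∂μ = ∑' n : ℕ, (n : ℝ≥0∞) ^ ((3 : ℝ) / 2) * μ (D n) := by
    simp only [hg2]
    rw [lintegral_tsum fun n => ((measurable_const.indicator (hpre n n)).const_mul _).aemeasurable]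
    refine tsum_congr fun n => ?_
    rw [lintegral_const_mul _ (measurable_const.indicator (hpre n n)),
      lintegral_indicator_const (hpre n n), one_mul, hμpre]
  -- key cocycle identity
  have hkey : ∀ x, H x + g2 x = H (τi x) + g1 x := by
    intro x
    rw [hH x, hH (τi x)]
    simp only [hg1, hg2]
    rw [← ENNReal.tsum_add, ← ENNReal.tsum_add]
    refine tsum_congr fun n => ?_
    rw [← mul_add, ← mul_add]
    congr 1
    have hshift : ∀ k, Set.indicator (τi^[k] ⁻¹' (D n)) (fun _ => (1:ℝ≥0∞)) (τi x)
        = Set.indicator (τi^[k+1] ⁻¹' (D n)) (fun _ => (1:ℝ≥0∞)) x := by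
      intro k
      simp only [Set.indicator_apply, Set.mem_preimage, Function.iterate_succ_apply]
    calc (∑ k ∈ Finset.range n, Set.indicator (τi^[k] ⁻¹' (D n)) (fun _ => (1:ℝ≥0∞)) x)
          + Set.indicator (τi^[n] ⁻¹' (D n)) (fun _ => (1:ℝ≥0∞)) x
        = ∑ k ∈ Finset.range (n+1),
            Set.indicator (τi^[k] ⁻¹' (D n)) (fun _ => (1:ℝ≥0∞)) x :=
          (Finset.sum_range_succ _ n).symm
      _ = (∑ k ∈ Finset.range n,
            Set.indicator (τi^[k+1] ⁻¹' (D n)) (fun _ => (1:ℝ≥0∞)) x)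
          + Set.indicator (τi^[0] ⁻¹' (D n)) (fun _ => (1:ℝ≥0∞)) x :=
          Finset.sum_range_succ' _ n
      _ = (∑ k ∈ Finset.range n,
            Set.indicator (τi^[k] ⁻¹' (D n)) (fun _ => (1:ℝ≥0∞)) (τi x))
          + Set.indicator (D n) (fun _ => (1:ℝ≥0∞)) x := by
          rw [Function.iterate_zero, Set.preimage_id]
          exact congrArg (· + _) (Finset.sum_congr rfl fun k _ => (hshift k).symm)
  -- a.e. finiteness of everything
  have hg1fin : ∀ᵐ x ∂μ, g1 x < ∞ := ae_lt_top hg1m (by rw [hlintg1]; exact hI)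
  have hg2fin : ∀ᵐ x ∂μ, g2 x < ∞ := ae_lt_top hg2m (by rw [hlintg2]; exact hI)
  have haeτ : ∀ᵐ x ∂μ, H (τi x) ≠ ∞ := by
    have hZ : μ (H ⁻¹' {∞}) = 0 := by
      have h1 := hae_fin
      rw [ae_iff] at h1
      have : {x | ¬ H x ≠ ∞} = H ⁻¹' {∞} := by
        ext x; simp
      rwa [this] at h1
    have h2 : μ (τi ⁻¹' (H ⁻¹' {∞})) = 0 := by
      rw [hτi.measure_preimage (hHm (measurableSet_singleton _)).nullMeasurableSet, hZ]
    rw [ae_iff]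
    have : {x | ¬ H (τi x) ≠ ∞} = τi ⁻¹' (H ⁻¹' {∞}) := by
      ext x; simp
    rwa [this]
  have hfeq : (fun x => (H x).toReal - (H (τi x)).toReal)
      =ᵐ[μ] fun x => (g1 x).toReal - (g2 x).toReal := by
    filter_upwards [hae_fin, haeτ, hg1fin, hg2fin] with x h1 h2 h3 h4
    have e := congrArg ENNReal.toReal (hkey x)
    rw [ENNReal.toReal_add h1 h4.ne, ENNReal.toReal_add h2 h3.ne] at e
    linarith
  have intg1 : Integrable (fun x => (g1 x).toReal) μ :=
    integrable_toReal_of_lintegral_ne_top hg1m.aemeasurable (by rw [hlintg1]; exact hI)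
  have intg2 : Integrable (fun x => (g2 x).toReal) μ :=
    integrable_toReal_of_lintegral_ne_top hg2m.aemeasurable (by rw [hlintg2]; exact hI)
  have intf : Integrable (fun x => (H x).toReal - (H (τi x)).toReal) μ :=
    (intg1.sub intg2).congr hfeq.symm
  refine ⟨hae_fin, hlint_top, intf, ?_⟩
  rw [integral_congr_ae hfeq, integral_sub intg1 intg2,
    integral_toReal hg1m.aemeasurable hg1fin, integral_toReal hg2m.aemeasurable hg2fin,
    hlintg1, hlintg2, sub_self]
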